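/- In a Rickart *-ring with proper involution, a ≤* b if and only if a = b a'' and a'' commutes with b* b, and this is also equivalent to: a = b a'' and a* b is self-adjoint. -/

import Mathlib

/-- In a Rickart *-ring with proper involution, `a ≤* b` iff `a = b a''` and
`a''` commutes with `b* b`; also iff `a = b a''` and `a* b` is self-adjoint. -/
theorem star_le_iff_commute {R : Type*} [Ring R] [StarRing R]
    (hprop : ∀ x : R, star x * x = 0 → x = 0)
    (p : R → R)
    (hproj : ∀ x : R, star (p x) = p x ∧ p x * p x = p x)
    (hann : ∀ x y : R, x * y = 0 ↔ y = p x * y)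
    (a b : R) :
    ((star a * a = star a * b ∧ a * star a = b * star a) ↔
      (a = b * p (p a) ∧ p (p a) * (star b * b) = (star b * b) * p (p a))) ∧
    ((star a * a = star a * b ∧ a * star a = b * star a) ↔
      (a = b * p (p a) ∧ star (star a * b) = star a * b)) := by
  set q := p (p a) with hq
  -- basic facts
  have hxp : ∀ x : R, x * p x = 0 := fun x => (hann x (p x)).mpr ((hproj x).2).symm
  have hq2 : q * q = q := (hproj (p a)).2
  have hqs : star q = q := (hproj (p a)).1
  -- p a * star a = 0
  have hpa : p a * star a = 0 := by
    have := congrArg star (hxp a)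
    simpa [star_mul, (hproj a).1] using this
  -- q * star a = star a
  have hqsa : q * star a = star a := ((hann (p a) (star a)).mp hpa).symm
  -- a * q = a
  have haq : a * q = a := by
    have := congrArg star hqsa
    simpa [star_mul, hqs] using this
  -- key: a * y = 0 → q * y = 0
  have hkey : ∀ y : R, a * y = 0 → q * y = 0 := by
    intro y hy
    have h1 : y = p a * y := (hann a y).mp hy
    have h2 : q * p a = 0 := by
      have := congrArg star (hxp (p a))
      simpa [star_mul, (hproj a).1, hqs, ← hq] using this
    calc q * y = q * (p a * y) := by rw [← h1]
      _ = (q * p a) * y := by rw [mul_assoc]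
      _ = 0 := by rw [h2, zero_mul]
  -- forward direction
  have fwd : (star a * a = star a * b ∧ a * star a = b * star a) →
      a = b * q ∧ q * (star b * b) = (star b * b) * q := by
    rintro ⟨h1, h2⟩
    have h3 : star b * a = star a * a := by
      have := congrArg star h1
      simpa [star_mul] using this.symm
    have h4 : a * star b = a * star a := by
      have := congrArg star h2
      simpa [star_mul] using this.symm
    -- q * (star b - star a) = 0
    have hc : a * (star b - star a) = 0 := by rw [mul_sub, h4, sub_self]
    have hqc : q * (star b - star a) = 0 := hkey _ hc
    have hqc' : q * star b = star a := by
      have h : q * star b - q * star a = 0 := by rw [← mul_sub]; exact hqc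
      rw [sub_eq_zero.mp h, hqsa]
    -- (b - a) * q = 0
    have hbq : (b - a) * q = 0 := by
      have h := congrArg star hqc
      rw [star_mul, star_sub, star_star, star_star, hqs, star_zero] at h
      exact h
    have habq : a = b * q := by
      have h : b * q - a * q = 0 := by rw [← sub_mul]; exact hbq
      calc a = a * q := haq.symm
        _ = b * q := (sub_eq_zero.mp h).symm
    refine ⟨habq, ?_⟩
    -- q * (star b * b) = star a * b = star a * a ; (star b * b) * q = star b * a = star a * a
    have left : q * (star b * b) = star a * a := by
      rw [← mul_assoc, hqc', h1.symm]
    have right : (star b * b) * q = star a * a := by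
      rw [mul_assoc, ← habq, h3]
    rw [left, right]
  -- backward direction
  have bwd : (a = b * q ∧ q * (star b * b) = (star b * b) * q) →
      (star a * a = star a * b ∧ a * star a = b * star a) := by
    rintro ⟨habq, hcomm⟩
    have hsa : star a = q * star b := by rw [habq, star_mul, hqs]
    constructor
    · calc star a * a = q * star b * (b * q) := by rw [← hsa, ← habq]
        _ = q * (star b * b) * q := by noncomm_ring
        _ = (star b * b) * q * q := by rw [hcomm]
        _ = (star b * b) * q := by rw [mul_assoc, hq2]
        _ = q * (star b * b) := hcomm.symm
        _ = star a * b := by rw [hsa, mul_assoc]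
    · calc a * star a = (b * q) * (q * star b) := by rw [← habq, ← hsa]
        _ = b * (q * q) * star b := by noncomm_ring
        _ = b * (q * star b) := by rw [hq2, mul_assoc]
        _ = b * star a := by rw [← hsa]
  refine ⟨⟨fwd, bwd⟩, ?_⟩
  constructor
  · rintro ⟨h1, h2⟩
    obtain ⟨habq, _⟩ := fwd ⟨h1, h2⟩
    refine ⟨habq, ?_⟩
    have h3 : star b * a = star a * a := by
      have := congrArg star h1
      simpa [star_mul] using this.symm
    rw [star_mul, star_star, h3, h1]
  · rintro ⟨habq, hsa⟩
    refine bwd ⟨habq, ?_⟩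
    have e1 : star a * b = q * (star b * b) := by
      rw [habq, star_mul, hqs, mul_assoc]
    have e2 : star (star a * b) = (star b * b) * q := by
      rw [star_mul, star_star, habq, ← mul_assoc]
    rw [← e1, ← e2, hsa]
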